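/- arXiv:1611.04447 — 2 statements merged into one kernel-verified Lean document; each statement's English description precedes it below -/
import Mathlib

section
/- Let k, m, n be positive integers with k < m ≤ n and gcd(n,s) = 1, and let K = {c ∈ F_{q^n} : c·u ∈ U_S for all u ∈ U_S}, which is the largest subfield F_{q^ℓ} of F_{q^n} over which U_S is a vector space. Then an F_q-linear map ψ : F_{q^n} → F_{q^n} with ψ(U_S) ⊆ U_S satisfies [for every f ∈ G_{k,s} there exists g ∈ G_{k,s} with f(ψ(u)) = g(u) for all u ∈ U_S] if and only if there exists c ∈ K such that ψ(u) = c·u for all u ∈ U_S. That is, the middle nucleus of π_S(G_{k,s}) is {c·X : c ∈ F_{q^ℓ}}. -/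
set_option linter.unusedSectionVars false
set_option maxHeartbeats 1000000

open Finset Polynomial Module

section StmtAux
variable {Fq Fqn : Type} [Field Fq] [Fintype Fq] [Field Fqn] [Fintype Fqn] [Algebra Fq Fqn]


lemma char_exists (q : ℕ) (hq : Fintype.card Fq = q) :
    ∃ p r : ℕ, p.Prime ∧ q = p ^ r ∧ CharP Fqn p := by
  obtain ⟨p, hc⟩ := CharP.exists Fq
  haveI := hc
  have hp : p.Prime := CharP.char_is_prime Fq p
  haveI := Fact.mk hp
  obtain ⟨r, _, hcard⟩ := FiniteField.card Fq p
  exact ⟨p, r, hp, by rw [← hq, hcard],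
    charP_of_injective_algebraMap (algebraMap Fq Fqn).injective p⟩

lemma addpow {q : ℕ} (hq : Fintype.card Fq = q) (e : ℕ) (x y : Fqn) :
    (x + y) ^ q ^ e = x ^ q ^ e + y ^ q ^ e := by
  obtain ⟨p, r, hp, rfl, hchar⟩ := char_exists (Fqn := Fqn) q hq
  haveI := hchar
  haveI := Fact.mk hp
  haveI : ExpChar Fqn p := ExpChar.prime hp
  rw [← pow_mul, add_pow_char_pow, pow_mul]

lemma subpow {q : ℕ} (hq : Fintype.card Fq = q) (e : ℕ) (x y : Fqn) :
    (x - y) ^ q ^ e = x ^ q ^ e - y ^ q ^ e := by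
  obtain ⟨p, r, hp, rfl, hchar⟩ := char_exists (Fqn := Fqn) q hq
  haveI := hchar
  haveI := Fact.mk hp
  haveI : ExpChar Fqn p := ExpChar.prime hp
  rw [← pow_mul, sub_pow_char_pow, pow_mul]

lemma sumpow {q : ℕ} (hq : Fintype.card Fq = q) (e : ℕ) {ι : Type*} (T : Finset ι)
    (f : ι → Fqn) : (∑ i ∈ T, f i) ^ q ^ e = ∑ i ∈ T, (f i) ^ q ^ e := by
  obtain ⟨p, r, hp, rfl, hchar⟩ := char_exists (Fqn := Fqn) q hq
  haveI := hchar
  haveI := Fact.mk hp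
  haveI : ExpChar Fqn p := ExpChar.prime hp
  rw [← pow_mul, sum_pow_char_pow]


-- x^q = x implies x in the image of Fq
lemma mem_range_of_pow_card {q : ℕ} (hq : Fintype.card Fq = q) (x : Fqn) (hx : x ^ q = x) :
    ∃ γ : Fq, algebraMap Fq Fqn γ = x := by
  classical
  have hq2 : 2 ≤ q := hq ▸ Fintype.one_lt_card
  set P : Polynomial Fqn := X ^ q - X with hP
  have hdeg : P.natDegree = q := by
    rw [hP, natDegree_sub_eq_left_of_natDegree_lt, natDegree_X_pow]
    rw [natDegree_X_pow, natDegree_X]; omega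
  have hPne : P ≠ 0 := fun h => by simp [h] at hdeg; omega
  set S : Finset Fqn := (Finset.univ : Finset Fq).image (algebraMap Fq Fqn) with hS
  set T : Finset Fqn := Finset.univ.filter (fun y => y ^ q = y) with hT
  have hST : S ⊆ T := by
    intro y hy
    rw [hS, Finset.mem_image] at hy
    obtain ⟨γ, _, rfl⟩ := hy
    rw [hT, Finset.mem_filter]
    refine ⟨Finset.mem_univ _, ?_⟩
    rw [← map_pow]
    congr 1
    rw [← hq]
    exact FiniteField.pow_card γ
  have hTroots : T ⊆ P.roots.toFinset := by
    intro y hy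
    rw [hT, Finset.mem_filter] at hy
    rw [Multiset.mem_toFinset, mem_roots hPne]
    simp [hP, IsRoot, hy.2, sub_eq_zero]
  have hcardT : T.card ≤ q := by
    calc T.card ≤ P.roots.toFinset.card := Finset.card_le_card hTroots
    _ ≤ Multiset.card P.roots := Multiset.toFinset_card_le _
    _ ≤ P.natDegree := P.card_roots'
    _ = q := hdeg
  have hcardS : S.card = q := by
    rw [hS, Finset.card_image_of_injective _ (algebraMap Fq Fqn).injective,
      Finset.card_univ, hq]
  have hSeq : S = T := Finset.eq_of_subset_of_card_le hST (by omega)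
  have hxT : x ∈ T := by rw [hT, Finset.mem_filter]; exact ⟨Finset.mem_univ _, hx⟩
  rw [← hSeq, hS, Finset.mem_image] at hxT
  obtain ⟨γ, _, hγ⟩ := hxT
  exact ⟨γ, hγ⟩

lemma pow_pow_fix {q : ℕ} (x : Fqn) (hx : x ^ q ^ s₀ = x) : ∀ a : ℕ, x ^ q ^ (s₀ * a) = x := by
  intro a
  induction a with
  | zero => simp
  | succ a ih =>
    have : s₀ * (a + 1) = s₀ * a + s₀ := by ring
    rw [this, pow_add, pow_mul, ih, hx]

-- using gcd(n,s)=1 : x^{q^s} = x → x^q = x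
lemma pow_q_fix {q n s : ℕ} (hq : Fintype.card Fq = q) (hqn : Fintype.card Fqn = q ^ n)
    (hn : 0 < n) (hgcd : Nat.gcd n s = 1) (x : Fqn) (hx : x ^ q ^ s = x) : x ^ q = x := by
  have hxn : x ^ q ^ n = x := by rw [← hqn]; exact FiniteField.pow_card x
  rcases eq_or_lt_of_le (show 1 ≤ n from hn) with h1 | h1
  · rw [← h1, pow_one] at hxn; exact hxn
  · have hcop : Nat.Coprime s n := Nat.coprime_comm.mp (hgcd)
    obtain ⟨a, ha⟩ := Nat.exists_mul_mod_eq_one_of_coprime hcop h1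
    have hdm : n * (s * a / n) + 1 = s * a := by
      conv_rhs => rw [← Nat.div_add_mod (s * a) n]
      omega
    have h2 : x ^ q ^ (s * a) = x := pow_pow_fix x hx a
    have h3 : x ^ q ^ (n * (s * a / n)) = x := pow_pow_fix x hxn _
    calc x ^ q = (x ^ q ^ (n * (s * a / n))) ^ q := by rw [h3]
    _ = x ^ q ^ (n * (s * a / n) + 1) := by rw [← pow_mul, pow_add, pow_one]
    _ = x := by rw [hdm, h2]


end StmtAux

section StmtAux2
variable {Fq Fqn : Type} [Field Fq] [Fintype Fq] [Field Fqn] [Fintype Fqn] [Algebra Fq Fqn]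

lemma basefix {q : ℕ} (hq : Fintype.card Fq = q) (c : Fq) (e : ℕ) : c ^ q ^ e = c := by
  induction e with
  | zero => simp
  | succ e ih => rw [pow_succ, pow_mul, ih, ← hq, FiniteField.pow_card]

lemma qpos {q : ℕ} (hq : Fintype.card Fq = q) : 0 < q := hq ▸ Fintype.card_pos

/-- the twisted linear factor x ↦ x^{q^s} - d x as an Fq-linear map -/
noncomputable def tmap {Fq Fqn : Type} [Field Fq] [Fintype Fq] [Field Fqn] [Fintype Fqn]
    [Algebra Fq Fqn] {q : ℕ} (hq : Fintype.card Fq = q) (s : ℕ) (d : Fqn) : Fqn →ₗ[Fq] Fqn where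
  toFun := fun x => x ^ q ^ s - d * x
  map_add' := by
    intro x y
    show (x + y) ^ q ^ s - d * (x + y) = (x ^ q ^ s - d * x) + (y ^ q ^ s - d * y)
    rw [addpow hq]
    ring
  map_smul' := by
    intro c x
    show (c • x) ^ q ^ s - d * (c • x) = c • (x ^ q ^ s - d * x)
    simp only [Algebra.smul_def]
    rw [mul_pow, ← map_pow, basefix hq]
    ring

lemma tmap_apply {q : ℕ} (hq : Fintype.card Fq = q) (s : ℕ) (d x : Fqn) :
    tmap hq s d x = x ^ q ^ s - d * x := rfl

lemma kernel_bound {q n s : ℕ} (hq : Fintype.card Fq = q) (hqn : Fintype.card Fqn = q ^ n)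
    (hn : 0 < n) (hgcd : Nat.gcd n s = 1) :
    ∀ (k : ℕ) (a : ℕ → Fqn) (V : Submodule Fq Fqn), k < finrank Fq V →
      (∀ x ∈ V, ∑ i ∈ range (k + 1), a i * x ^ q ^ (s * i) = 0) → ∀ i ≤ k, a i = 0 := by
  have hq1 : 0 < q := qpos hq
  intro k
  induction k with
  | zero =>
    intro a V hV hf i hi
    interval_cases i
    have hVne : V ≠ ⊥ := by
      intro h
      rw [h, finrank_bot] at hV
      omega
    obtain ⟨x, hxV, hx0⟩ := Submodule.exists_mem_ne_zero_of_ne_bot hVne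
    have := hf x hxV
    rw [Finset.sum_range_one, Nat.mul_zero, pow_zero, pow_one] at this
    rcases mul_eq_zero.mp this with h | h
    · exact h
    · exact absurd h hx0
  | succ k IH =>
    intro a V hV hf
    -- pick a nonzero element u of V
    have hVne : V ≠ ⊥ := by
      intro h
      rw [h, finrank_bot] at hV
      omega
    obtain ⟨u, huV, hu0⟩ := Submodule.exists_mem_ne_zero_of_ne_bot hVne
    set d : Fqn := u ^ q ^ s * u⁻¹ with hd
    have hdu : u ^ q ^ s = d * u := by rw [hd, mul_assoc, inv_mul_cancel₀ hu0, mul_one]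
    have hd0 : d ≠ 0 := by
      rw [hd]
      exact mul_ne_zero (pow_ne_zero _ hu0) (inv_ne_zero hu0)
    -- the quotient coefficients, defined by downward recursion
    set G : ℕ → Fqn := fun j =>
      Nat.rec (a (k + 1)) (fun j ih => a (k - j) + ih * d ^ q ^ (s * (k - j))) j with hG
    set g : ℕ → Fqn := fun i => if k < i then 0 else G (k - i) with hg
    have hgtop : g k = a (k + 1) := by simp [hg, hG]
    have hgzero : ∀ i, k < i → g i = 0 := by
      intro i hi
      simp [hg, hi]
    have hgrec : ∀ i < k, g i = a (i + 1) + g (i + 1) * d ^ q ^ (s * (i + 1)) := by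
      intro i hik
      have h1 : k - i = (k - i - 1) + 1 := by omega
      have h2 : k - (k - i - 1) = i + 1 := by omega
      have h3 : ¬ k < i := by omega
      have h4 : ¬ k < i + 1 := by omega
      have h5 : k - (i + 1) = k - i - 1 := by omega
      have hstep : G ((k - i - 1) + 1)
          = a (k - (k - i - 1)) + G (k - i - 1) * d ^ q ^ (s * (k - (k - i - 1))) := rfl
      simp only [hg, h3, if_false, h4, h5]
      rw [h1, hstep, h2]
      simp only [Nat.add_sub_cancel]
    have ha : ∀ i ≤ k, a (i + 1) = g i - g (i + 1) * d ^ q ^ (s * (i + 1)) := by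
      intro i hik
      rcases lt_or_eq_of_le hik with h | rfl
      · rw [hgrec i h]
        ring
      · rw [hgtop, hgzero (i + 1) (by omega)]
        ring
    -- the fundamental division identity, as maps on all of Fqn
    have hid : ∀ x : Fqn, ∑ i ∈ range (k + 2), a i * x ^ q ^ (s * i)
        = (∑ j ∈ range (k + 1), g j * (x ^ q ^ s - d * x) ^ q ^ (s * j))
          + (a 0 + g 0 * d) * x := by
      intro x
      have hexp : ∀ j : ℕ, (x ^ q ^ s - d * x) ^ q ^ (s * j)
          = x ^ q ^ (s * (j + 1)) - d ^ q ^ (s * j) * x ^ q ^ (s * j) := by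
        intro j
        rw [subpow hq, mul_pow, ← pow_mul, ← pow_add]
        congr 2
        ring
      have hS : ∑ j ∈ range (k + 1), g j * (x ^ q ^ s - d * x) ^ q ^ (s * j)
          = ∑ j ∈ range (k + 1),
            (g j * x ^ q ^ (s * (j + 1)) - g j * d ^ q ^ (s * j) * x ^ q ^ (s * j)) :=
        Finset.sum_congr rfl fun j _ => by rw [hexp j]; ring
      set F : ℕ → Fqn := fun i => g i * d ^ q ^ (s * i) * x ^ q ^ (s * i) with hF
      have h6 : ∑ i ∈ range (k + 2), F i = ∑ i ∈ range (k + 1), F (i + 1) + F 0 :=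
        Finset.sum_range_succ' F (k + 1)
      have h7 : ∑ i ∈ range (k + 2), F i = ∑ i ∈ range (k + 1), F i + F (k + 1) :=
        Finset.sum_range_succ F (k + 1)
      have hFtop : F (k + 1) = 0 := by rw [hF]; simp only; rw [hgzero (k + 1) (by omega)]; ring
      have hF0 : F 0 = g 0 * d * x := by
        rw [hF]; simp only [Nat.mul_zero, pow_zero, pow_one]
      have h8 : ∑ i ∈ range (k + 1), F (i + 1)
          = ∑ i ∈ range (k + 1), F i - g 0 * d * x := by
        rw [hFtop] at h7
        rw [hF0] at h6
        linear_combination h7 - h6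
      have hL : ∑ i ∈ range (k + 2), a i * x ^ q ^ (s * i)
          = ∑ i ∈ range (k + 1), a (i + 1) * x ^ q ^ (s * (i + 1)) + a 0 * x := by
        have := Finset.sum_range_succ' (fun i => a i * x ^ q ^ (s * i)) (k + 1)
        rw [this]
        congr 1
        rw [Nat.mul_zero, pow_zero, pow_one]
      have hM : ∑ i ∈ range (k + 1), a (i + 1) * x ^ q ^ (s * (i + 1))
          = ∑ i ∈ range (k + 1), g i * x ^ q ^ (s * (i + 1)) - ∑ i ∈ range (k + 1), F (i + 1) := by
        rw [← Finset.sum_sub_distrib]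
        refine Finset.sum_congr rfl fun i hi => ?_
        rw [ha i (Nat.lt_succ_iff.mp (Finset.mem_range.mp hi)), hF]
        simp only
        ring
      rw [hL, hM, h8, hS, Finset.sum_sub_distrib, hF]
      simp only
      ring
    -- the linear map t and its kernel
    set t : Fqn →ₗ[Fq] Fqn := tmap hq s d with ht
    have htu : t u = 0 := by rw [ht, tmap_apply, hdu]; ring
    -- remainder is zero
    have hr : a 0 + g 0 * d = 0 := by
      have h0 := hid u
      rw [hf u huV] at h0
      have hz : ∀ j ∈ range (k + 1), g j * (u ^ q ^ s - d * u) ^ q ^ (s * j) = 0 := by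
        intro j _
        rw [hdu, sub_self, zero_pow (by positivity), mul_zero]
      rw [Finset.sum_eq_zero hz, zero_add] at h0
      rcases mul_eq_zero.mp h0.symm with h | h
      · exact h
      · exact absurd h hu0
    -- the image subspace
    set W : Submodule Fq Fqn := Submodule.map t V with hW
    have hkerspan : ∀ x : Fqn, t x = 0 → x ∈ Submodule.span Fq {u} := by
      intro x hx
      rcases eq_or_ne x 0 with rfl | hx0
      · exact Submodule.zero_mem _
      rw [ht, tmap_apply, sub_eq_zero] at hx
      set w : Fqn := x * u⁻¹ with hw
      have hwfix : w ^ q ^ s = w := by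
        rw [hw, mul_pow, hx, inv_pow, hdu, mul_inv_rev]
        field_simp
      have hwq : w ^ q = w := pow_q_fix hq hqn hn hgcd w hwfix
      obtain ⟨γ, hγ⟩ := mem_range_of_pow_card hq w hwq
      rw [Submodule.mem_span_singleton]
      refine ⟨γ, ?_⟩
      rw [Algebra.smul_def, hγ, hw]
      field_simp
    have hWrank : k < finrank Fq W := by
      set t' : V →ₗ[Fq] Fqn := t.comp V.subtype with ht'
      have hrange : LinearMap.range t' = W := by
        rw [ht', LinearMap.range_comp, Submodule.range_subtype, hW]
      have hrn := LinearMap.finrank_range_add_finrank_ker t'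
      have hker : finrank Fq (LinearMap.ker t') ≤ 1 := by
        set φ : LinearMap.ker t' →ₗ[Fq] Submodule.span Fq {u} :=
          LinearMap.codRestrict (Submodule.span Fq {u})
            (V.subtype.comp (LinearMap.ker t').subtype)
            (fun x => hkerspan x.1.1 x.2) with hφ
        have hinj : Function.Injective φ := by
          intro x y hxy
          have h1 : (φ x : Fqn) = (φ y : Fqn) := congrArg Subtype.val hxy
          exact Subtype.ext (Subtype.ext h1)
        calc finrank Fq (LinearMap.ker t')
            ≤ finrank Fq (Submodule.span Fq {u}) :=
              LinearMap.finrank_le_finrank_of_injective hinj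
          _ = 1 := finrank_span_singleton hu0
      rw [hrange] at hrn
      omega
    -- g kills W
    have hgW : ∀ y ∈ W, ∑ j ∈ range (k + 1), g j * y ^ q ^ (s * j) = 0 := by
      intro y hy
      obtain ⟨x, hxV, rfl⟩ := hy
      have h0 := hid x
      rw [hf x hxV, hr, zero_mul, add_zero] at h0
      rw [ht, tmap_apply]
      exact h0.symm
    have hg0 : ∀ i ≤ k, g i = 0 := IH g W hWrank hgW
    -- conclude
    intro i hi
    rcases Nat.eq_zero_or_pos i with rfl | hipos
    · have := hr
      rw [hg0 0 (by omega), zero_mul, add_zero] at this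
      exact this
    · obtain ⟨i', rfl⟩ := Nat.exists_eq_add_of_le hipos
      rw [Nat.add_comm 1 i'] at *
      have h1 : a (i' + 1) = g i' - g (i' + 1) * d ^ q ^ (s * (i' + 1)) := ha i' (by omega)
      rw [hg0 i' (by omega)] at h1
      rcases Nat.lt_or_ge (i' + 1) (k + 1) with h | h
      · rw [hg0 (i' + 1) (by omega)] at h1
        rw [h1]; ring
      · rw [hgzero (i' + 1) (by omega)] at h1
        rw [h1]; ring

end StmtAux2

open Finset in
theorem stmt11 (q n m k s : ℕ) (Fq Fqn : Type) [Field Fq] [Fintype Fq] [Field Fqn]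
    [Fintype Fqn] [Algebra Fq Fqn]
    (hq : Fintype.card Fq = q) (hqn : Fintype.card Fqn = q ^ n)
    (hn : 0 < n) (hk : 0 < k) (hkm : k < m) (hmn : m ≤ n)
    (hs : 0 < s) (hgcd : Nat.gcd n s = 1)
    (α : Fin m → Fqn) (hα : LinearIndependent Fq α) :
    -- K = {c ∈ F_{q^n} : c·U_S ⊆ U_S} (the largest subfield F_{q^ℓ} over which U_S
    -- is a vector space); an F_q-linear map ψ with ψ(U_S) ⊆ U_S belongs to the
    -- middle nucleus of π_S(G_{k,s}) iff it is multiplication by some c ∈ K on U_S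
    ∀ ψ : Fqn →ₗ[Fq] Fqn, (∀ u ∈ Submodule.span Fq (Set.range α),
        ψ u ∈ Submodule.span Fq (Set.range α)) →
      ((∀ a : ℕ → Fqn, ∃ b : ℕ → Fqn, ∀ u ∈ Submodule.span Fq (Set.range α),
          (∑ i ∈ Finset.range k, a i * (ψ u) ^ q ^ (s * i))
            = ∑ i ∈ Finset.range k, b i * u ^ q ^ (s * i))
        ↔ ∃ c ∈ {c : Fqn | ∀ u ∈ Submodule.span Fq (Set.range α),
                    c * u ∈ Submodule.span Fq (Set.range α)},
            ∀ u ∈ Submodule.span Fq (Set.range α), ψ u = c * u) := by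
  intro ψ hψ
  set U : Submodule Fq Fqn := Submodule.span Fq (Set.range α) with hU
  have hq1 : 0 < q := qpos hq
  have hrankU : finrank Fq U = m := by
    rw [hU, finrank_span_eq_card hα, Fintype.card_fin]
  constructor
  · intro hmain
    -- Step 1: ψ agrees on U with a q^s-polynomial of q^s-degree < k
    obtain ⟨b, hb⟩ := hmain (fun i => if i = 0 then 1 else 0)
    have hL : ∀ z : Fqn, ∑ i ∈ range k, (if i = 0 then (1:Fqn) else 0) * z ^ q ^ (s * i)
        = z := by
      intro z
      rw [Finset.sum_eq_single 0]
      · simp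
      · intro i _ h0
        simp [h0]
      · intro h
        exact absurd (Finset.mem_range.mpr hk) h
    have hb1 : ∀ u ∈ U, ψ u = ∑ i ∈ range k, b i * u ^ q ^ (s * i) := by
      intro u hu
      rw [← hb u hu, hL]
    -- Step 2: all higher coefficients vanish
    have hzero : ∀ j : ℕ, ∀ i, 0 < i → i < k → k ≤ i + j → b i = 0 := by
      intro j
      induction j with
      | zero => intro i _ h2 h3; omega
      | succ j IHj =>
        intro i hi0 hik hkij
        rcases Nat.lt_or_ge (i + j) k with hcase | hcase
        swap
        · exact IHj i hi0 hik hcase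
        -- so k = i + j + 1
        have hkeq : k = i + j + 1 := by omega
        set jj : ℕ := k - i with hjj
        have hjj1 : 1 ≤ jj := by omega
        have hjjk : jj < k := by omega
        have hbz : ∀ l, i < l → l < k → b l = 0 := fun l h1 h2 => IHj l (by omega) h2 (by omega)
        obtain ⟨c, hc⟩ := hmain (fun l => if l = jj then 1 else 0)
        have hc1 : ∀ u ∈ U, (ψ u) ^ q ^ (s * jj) = ∑ l ∈ range k, c l * u ^ q ^ (s * l) := by
          intro u hu
          rw [← hc u hu, Finset.sum_eq_single jj]
          · simp
          · intro l _ h0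
            simp [h0]
          · intro h
            exact absurd (Finset.mem_range.mpr hjjk) h
        -- the shifted expansion of (ψ u)^{q^{s·jj}}
        have hshift : ∀ u ∈ U, (ψ u) ^ q ^ (s * jj)
            = ∑ l ∈ range (i + 1), (b l) ^ q ^ (s * jj) * u ^ q ^ (s * (l + jj)) := by
          intro u hu
          rw [hb1 u hu, sumpow hq]
          have hterm : ∀ l : ℕ, (b l * u ^ q ^ (s * l)) ^ q ^ (s * jj)
              = (b l) ^ q ^ (s * jj) * u ^ q ^ (s * (l + jj)) := by
            intro l
            rw [mul_pow, ← pow_mul, ← pow_add]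
            congr 2
            ring
          rw [Finset.sum_congr rfl fun l _ => hterm l]
          symm
          apply Finset.sum_subset
          · exact Finset.range_subset_range.mpr (by omega)
          · intro l hl hl2
            rw [hbz l (by simpa using hl2) (Finset.mem_range.mp hl), zero_pow, zero_mul]
            positivity
        -- the difference polynomial D kills U
        set D : ℕ → Fqn := fun l =>
          (if jj ≤ l then (b (l - jj)) ^ q ^ (s * jj) else 0) - (if l < k then c l else 0)
          with hD
        have hDvanish : ∀ u ∈ U, ∑ l ∈ range (k + 1), D l * u ^ q ^ (s * l) = 0 := by
          intro u hu
          have hsplit : ∀ l : ℕ, D l * u ^ q ^ (s * l)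
              = (if jj ≤ l then (b (l - jj)) ^ q ^ (s * jj) else 0) * u ^ q ^ (s * l)
                - (if l < k then c l else 0) * u ^ q ^ (s * l) := by
            intro l
            rw [hD]
            ring
          rw [Finset.sum_congr rfl fun l _ => hsplit l, Finset.sum_sub_distrib]
          have hsum2 : ∑ l ∈ range (k + 1), (if l < k then c l else 0) * u ^ q ^ (s * l)
              = ∑ l ∈ range k, c l * u ^ q ^ (s * l) := by
            rw [Finset.sum_range_succ]
            simp only [lt_irrefl, if_false, zero_mul, add_zero]
            exact Finset.sum_congr rfl fun l hl => by
              rw [if_pos (Finset.mem_range.mp hl)]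
          have hsum1 : ∑ l ∈ range (k + 1),
              (if jj ≤ l then (b (l - jj)) ^ q ^ (s * jj) else 0) * u ^ q ^ (s * l)
              = (ψ u) ^ q ^ (s * jj) := by
            rw [Finset.range_eq_Ico, ← Finset.sum_Ico_consecutive _ (Nat.zero_le jj) (by omega : jj ≤ k + 1)]
            have hz : ∑ l ∈ Finset.Ico 0 jj,
                (if jj ≤ l then (b (l - jj)) ^ q ^ (s * jj) else 0) * u ^ q ^ (s * l) = 0 := by
              apply Finset.sum_eq_zero
              intro l hl
              have hlj : l < jj := (Finset.mem_Ico.mp hl).2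
              rw [if_neg (by omega), zero_mul]
            rw [hz, zero_add, Finset.sum_Ico_eq_sum_range]
            have hlen : k + 1 - jj = i + 1 := by omega
            rw [hlen, hshift u hu]
            refine Finset.sum_congr rfl fun l _ => ?_
            rw [if_pos (by omega : jj ≤ jj + l), Nat.add_sub_cancel_left, Nat.add_comm jj l]
          rw [hsum1, hsum2, hc1 u hu, sub_self]
        have hD0 := kernel_bound hq hqn hn hgcd k D U (by rw [hrankU]; exact hkm) hDvanish
        have hDk : (if jj ≤ k then (b (k - jj)) ^ q ^ (s * jj) else 0)
            - (if k < k then c k else 0) = 0 := hD0 k le_rfl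
        rw [if_pos (by omega : jj ≤ k), if_neg (lt_irrefl k), sub_zero] at hDk
        have : b (k - jj) = 0 := by
          have hne : q ^ (s * jj) ≠ 0 := by positivity
          exact pow_eq_zero_iff hne |>.mp hDk
        rwa [show k - jj = i by omega] at this
    -- conclude: ψ is multiplication by b 0 on U
    have hψu : ∀ u ∈ U, ψ u = b 0 * u := by
      intro u hu
      rw [hb1 u hu, Finset.sum_eq_single 0]
      · simp
      · intro l hl h0
        rw [hzero k l (Nat.pos_of_ne_zero h0) (Finset.mem_range.mp hl) (by omega), zero_mul]
      · intro h
        exact absurd (Finset.mem_range.mpr hk) h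
    refine ⟨b 0, ?_, hψu⟩
    intro u hu
    rw [← hψu u hu]
    exact hψ u hu
  · rintro ⟨c, _, hcψ⟩ a
    refine ⟨fun i => a i * c ^ q ^ (s * i), ?_⟩
    intro u hu
    refine Finset.sum_congr rfl fun i _ => ?_
    rw [hcψ u hu, mul_pow]
    ring
end

section
/- Let k, m, n be positive integers with k < m ≤ n and gcd(n,s) = 1, and assume 1 ∈ S. Let ℓ be the smallest positive integer such that u^{q^ℓ} = u for every u ∈ U_S; then ℓ divides n, and set r = n/ℓ. Then an F_q-linear map φ : F_{q^n} → F_{q^n} satisfies [for every f ∈ G_{k,s} there exists g ∈ G_{k,s} with φ(f(u)) = g(u) for all u ∈ U_S] if and only if there exist c_0, …, c_{r−1} ∈ F_{q^n} such that φ(x) = Σ_{i=0}^{r−1} c_i x^{q^{iℓ}} for all x ∈ F_{q^n}. That is, the right nucleus of π_S(G_{k,s}) is {Σ_{i=0}^{r−1} c_i X^{q^{iℓ}} : c_i ∈ F_{q^n}}. -/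
set_option linter.unusedSectionVars false
open Finset

section AuxBasic

lemma pow_q_iter {K : Type} [Monoid K] (x : K) (Q a : ℕ) (h : x ^ Q ^ a = x) :
    ∀ t, x ^ Q ^ (a * t) = x := by
  intro t
  induction t with
  | zero => simp
  | succ t ih =>
    rw [Nat.mul_succ, pow_add, pow_mul, ih, h]

lemma nat_bezout (a b : ℕ) (ha : 0 < a) (hb : 0 < b) :
    ∃ u v : ℕ, a * u = Nat.gcd a b + b * v := by
  have hg : (Nat.gcd a b : ℤ) = a * Nat.gcdA a b + b * Nat.gcdB a b := Nat.gcd_eq_gcd_ab a b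
  set x := Nat.gcdA a b with hx
  set y := Nat.gcdB a b with hy
  set t : ℤ := (x.natAbs : ℤ) + (y.natAbs : ℤ) + 1 with ht
  have hxx : -(x.natAbs : ℤ) ≤ x := by
    have := neg_abs_le x; rwa [Int.abs_eq_natAbs] at this
  have hyy : y ≤ (y.natAbs : ℤ) := Int.le_natAbs
  have ha1 : (1 : ℤ) ≤ (a : ℤ) := by exact_mod_cast ha
  have hb1 : (1 : ℤ) ≤ (b : ℤ) := by exact_mod_cast hb
  have ht0 : 0 ≤ t := by positivity
  have hu0 : 0 ≤ x + t * b := by nlinarith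
  have hv0 : 0 ≤ t * a - y := by nlinarith
  refine ⟨(x + t * b).toNat, (t * a - y).toNat, ?_⟩
  have key : (a : ℤ) * (x + t * b) = Nat.gcd a b + b * (t * a - y) := by
    rw [hg]; ring
  have : (a : ℤ) * ((x + t * b).toNat : ℤ) = (Nat.gcd a b : ℤ) + b * ((t * a - y).toNat : ℤ) := by
    rw [Int.toNat_of_nonneg hu0, Int.toNat_of_nonneg hv0]; exact key
  exact_mod_cast this

lemma pow_q_gcd {K : Type} [Monoid K] (x : K) (Q a b : ℕ) (ha : 0 < a) (hb : 0 < b)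
    (hxa : x ^ Q ^ a = x) (hxb : x ^ Q ^ b = x) : x ^ Q ^ (Nat.gcd a b) = x := by
  obtain ⟨u, v, huv⟩ := nat_bezout a b ha hb
  have h2 : x ^ Q ^ (b * v) = x := pow_q_iter x Q b hxb v
  calc x ^ Q ^ Nat.gcd a b = (x ^ Q ^ (b * v)) ^ Q ^ Nat.gcd a b := by rw [h2]
    _ = x ^ (Q ^ (b * v) * Q ^ Nat.gcd a b) := (pow_mul x _ _).symm
    _ = x ^ Q ^ (b * v + Nat.gcd a b) := by rw [pow_add]
    _ = x ^ Q ^ (a * u) := by rw [show b * v + Nat.gcd a b = a * u by omega]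
    _ = x := pow_q_iter x Q a hxa u

lemma card_le_of_forall_pow {K : Type} [Field K] [Fintype K] (M : ℕ) (hM : 1 < M)
    (h : ∀ x : K, x ^ M = x) : Fintype.card K ≤ M := by
  classical
  set P : Polynomial K := Polynomial.X ^ M - Polynomial.X with hP
  have hPne : P ≠ 0 := by
    intro h0
    have hco : P.coeff M = 1 := by
      simp [hP, Polynomial.coeff_X_pow, Polynomial.coeff_X]
      omega
    rw [h0] at hco
    simp at hco
  have hsub : (Finset.univ : Finset K) ⊆ P.roots.toFinset := by
    intro x _
    rw [Multiset.mem_toFinset, Polynomial.mem_roots hPne]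
    simp [hP, Polynomial.IsRoot, h x]
  calc Fintype.card K = (Finset.univ : Finset K).card := rfl
    _ ≤ P.roots.toFinset.card := Finset.card_le_card hsub
    _ ≤ Multiset.card P.roots := Multiset.toFinset_card_le _
    _ ≤ P.natDegree := Polynomial.card_roots' P
    _ ≤ M := by
        refine (Polynomial.natDegree_sub_le _ _).trans ?_
        simp [Polynomial.natDegree_X_pow, Polynomial.natDegree_X]
        omega

end AuxBasic

section AuxField

variable {q : ℕ} {Fq Fqn : Type} [Field Fq] [Fintype Fq] [Field Fqn] [Fintype Fqn]
  [Algebra Fq Fqn]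

lemma fq_pow_qt (hq : Fintype.card Fq = q) (a : Fq) (t : ℕ) : a ^ q ^ t = a := by
  have h1 : a ^ q ^ 1 = a := by rw [pow_one, ← hq]; exact FiniteField.pow_card a
  have := pow_q_iter a q 1 h1 t
  rwa [one_mul] at this

lemma frob_add' (hq : Fintype.card Fq = q) (t : ℕ) (x y : Fqn) :
    (x + y) ^ q ^ t = x ^ q ^ t + y ^ q ^ t := by
  haveI := ringChar.charP Fq
  obtain ⟨e, hp, hcard⟩ := FiniteField.card Fq (ringChar Fq)
  haveI : Fact (Nat.Prime (ringChar Fq)) := ⟨hp⟩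
  haveI : CharP Fqn (ringChar Fq) :=
    charP_of_injective_algebraMap (algebraMap Fq Fqn).injective (ringChar Fq)
  have hqpe : q = ringChar Fq ^ (e : ℕ) := by rw [← hq, hcard]
  rw [hqpe, ← pow_mul]
  exact add_pow_char_pow x y _ _

/-- Frobenius as an `Fq`-linear map on `Fqn`. -/
def frobL (hq : Fintype.card Fq = q) (t : ℕ) : Fqn →ₗ[Fq] Fqn where
  toFun x := x ^ q ^ t
  map_add' := frob_add' hq t
  map_smul' a x := by
    simp only [Algebra.smul_def, mul_pow, RingHom.id_apply, ← map_pow, fq_pow_qt hq a t]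

lemma frobL_apply (hq : Fintype.card Fq = q) (t : ℕ) (x : Fqn) :
    frobL hq t x = x ^ q ^ t := rfl

lemma frob_sum' (hq : Fintype.card Fq = q) (t : ℕ) {ι : Type*} (s : Finset ι) (f : ι → Fqn) :
    (∑ i ∈ s, f i) ^ q ^ t = ∑ i ∈ s, (f i) ^ q ^ t :=
  map_sum (frobL hq t) f s

lemma frob_sub' (hq : Fintype.card Fq = q) (t : ℕ) (x y : Fqn) :
    (x - y) ^ q ^ t = x ^ q ^ t - y ^ q ^ t :=
  map_sub (frobL hq t) x y

lemma fq_image (hq : Fintype.card Fq = q) (x : Fqn) (hx : x ^ q = x) :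
    ∃ a : Fq, algebraMap Fq Fqn a = x := by
  classical
  set P : Polynomial Fqn := Polynomial.X ^ q - Polynomial.X with hP
  have hq2 : 1 < q := by rw [← hq]; exact Fintype.one_lt_card
  have hPne : P ≠ 0 := by
    intro h0
    have hco : P.coeff q = 1 := by
      simp [hP, Polynomial.coeff_X_pow, Polynomial.coeff_X]
      omega
    rw [h0] at hco
    simp at hco
  set R : Finset Fqn := P.roots.toFinset with hR
  have him : (Finset.univ.image (algebraMap Fq Fqn)) ⊆ R := by
    intro y hy
    obtain ⟨a, -, rfl⟩ := Finset.mem_image.mp hy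
    rw [hR, Multiset.mem_toFinset, Polynomial.mem_roots hPne]
    simp only [hP, Polynomial.IsRoot, Polynomial.eval_sub, Polynomial.eval_pow,
      Polynomial.eval_X]
    rw [← map_pow, ← hq, FiniteField.pow_card, sub_self]
  have hcardR : R.card ≤ q := by
    calc R.card ≤ Multiset.card P.roots := Multiset.toFinset_card_le _
      _ ≤ P.natDegree := Polynomial.card_roots' P
      _ ≤ q := by
          refine (Polynomial.natDegree_sub_le _ _).trans ?_
          rw [Polynomial.natDegree_X_pow, Polynomial.natDegree_X]
          omega
  have hcardim : (Finset.univ.image (algebraMap Fq Fqn)).card = q := by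
    rw [Finset.card_image_of_injective _ (algebraMap Fq Fqn).injective, Finset.card_univ, hq]
  have heq : Finset.univ.image (algebraMap Fq Fqn) = R :=
    Finset.eq_of_subset_of_card_le him (by omega)
  have hxR : x ∈ R := by
    rw [hR, Multiset.mem_toFinset, Polynomial.mem_roots hPne]
    simp [hP, Polynomial.IsRoot, hx]
  rw [← heq] at hxR
  obtain ⟨a, -, ha⟩ := Finset.mem_image.mp hxR
  exact ⟨a, ha⟩

end AuxField

section LemA

variable {q n s : ℕ} {Fq Fqn : Type} [Field Fq] [Fintype Fq] [Field Fqn] [Fintype Fqn]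
  [Algebra Fq Fqn]

lemma sum_shift {M : Type} [AddCommMonoid M] (N d : ℕ) (f : ℕ → M) :
    ∑ i ∈ Finset.range (N + d), (if d ≤ i then f (i - d) else 0) = ∑ i ∈ Finset.range N, f i := by
  induction N with
  | zero =>
    simp only [Nat.zero_add, Finset.range_zero, Finset.sum_empty]
    apply Finset.sum_eq_zero
    intro i hi
    rw [Finset.mem_range] at hi
    rw [if_neg (by omega)]
  | succ N ih =>
    rw [show N + 1 + d = (N + d) + 1 by omega, Finset.sum_range_succ, Finset.sum_range_succ,
      ih, if_pos (by omega), show N + d - d = N by omega]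

lemma lemA (hq : Fintype.card Fq = q) (hqn : Fintype.card Fqn = q ^ n)
    (hn : 0 < n) (hs : 0 < s) (hsn : Nat.gcd s n = 1) :
    ∀ (d : ℕ) (W : Submodule Fq Fqn) (a : ℕ → Fqn),
      (∀ u ∈ W, ∑ i ∈ Finset.range (d+1), a i * u ^ q ^ (s*i) = 0) →
      d + 1 ≤ Module.finrank Fq W → ∀ i ≤ d, a i = 0 := by
  haveI : FiniteDimensional Fq Fqn := Module.Finite.of_finite
  have hfix : ∀ x : Fqn, x ^ q ^ s = x → ∃ a : Fq, algebraMap Fq Fqn a = x := by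
    intro x hx
    have hxn : x ^ q ^ n = x := by rw [← hqn]; exact FiniteField.pow_card x
    have hg := pow_q_gcd x q s n hs hn hx hxn
    rw [hsn, pow_one] at hg
    exact fq_image hq x hg
  have hex : ∀ (W : Submodule Fq Fqn), 1 ≤ Module.finrank Fq W → ∃ w ∈ W, w ≠ 0 := by
    intro W hrank
    by_contra hc
    push_neg at hc
    have hbot : W = ⊥ := by
      ext x
      simp only [Submodule.mem_bot]
      exact ⟨fun hx => hc x hx, fun hx => hx ▸ W.zero_mem⟩
    rw [hbot, finrank_bot] at hrank
    omega
  intro d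
  induction d with
  | zero =>
    intro W a hvan hrank i hi
    obtain ⟨w, hwW, hw0⟩ := hex W hrank
    have := hvan w hwW
    simp only [Nat.zero_add, Finset.sum_range_one, Nat.mul_zero, pow_zero, pow_one] at this
    interval_cases i
    exact (mul_eq_zero.mp this).resolve_right hw0
  | succ d ih =>
    intro W a hvan hrank
    obtain ⟨w, hwW, hw0⟩ := hex W (by omega)
    set a' : ℕ → Fqn := fun i => a i * w ^ q ^ (s*i) with ha'
    let e : Fqn ≃ₗ[Fq] Fqn := LinearEquiv.ofLinear (LinearMap.mulLeft Fq w⁻¹)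
      (LinearMap.mulLeft Fq w)
      (by ext x; simp only [LinearMap.comp_apply, LinearMap.mulLeft_apply, LinearMap.id_apply,
            ← mul_assoc, inv_mul_cancel₀ hw0, one_mul])
      (by ext x; simp only [LinearMap.comp_apply, LinearMap.mulLeft_apply, LinearMap.id_apply,
            ← mul_assoc, mul_inv_cancel₀ hw0, one_mul])
    set U : Submodule Fq Fqn := Submodule.map (e : Fqn →ₗ[Fq] Fqn) W with hU
    have hUmem : ∀ x : Fqn, x ∈ U → w * x ∈ W := by
      rintro x ⟨y, hy, rfl⟩
      have : w * (e : Fqn →ₗ[Fq] Fqn) y = y := by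
        simp only [e, LinearEquiv.coe_coe, LinearEquiv.ofLinear_apply, LinearMap.mulLeft_apply, ← mul_assoc,
          mul_inv_cancel₀ hw0, one_mul]
      rw [this]
      exact hy
    have h1U : (1:Fqn) ∈ U := ⟨w, hwW, by
      simp only [e, LinearEquiv.coe_coe, LinearEquiv.ofLinear_apply, LinearMap.mulLeft_apply, inv_mul_cancel₀ hw0]⟩
    have hvanU : ∀ u ∈ U, ∑ i ∈ Finset.range (d+2), a' i * u ^ q ^ (s*i) = 0 := by
      intro u hu
      have h0 := hvan (w*u) (hUmem u hu)
      calc ∑ i ∈ Finset.range (d+2), a' i * u ^ q ^ (s*i)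
          = ∑ i ∈ Finset.range (d+2), a i * (w*u) ^ q ^ (s*i) := by
            refine Finset.sum_congr rfl fun i _ => ?_
            rw [ha', mul_pow, mul_assoc]
        _ = 0 := h0
    have hsum0 : ∑ i ∈ Finset.range (d+2), a' i = 0 := by
      have := hvanU 1 h1U
      simpa using this
    set β : ℕ → Fqn := fun i => -(∑ j ∈ Finset.range (i+1), a' j) with hβ
    have habel : ∀ x : Fqn, ∑ i ∈ Finset.range (d+2), a' i * x ^ q ^ (s*i)
        = ∑ i ∈ Finset.range (d+1), β i * (x ^ q ^ (s*(i+1)) - x ^ q ^ (s*i)) := by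
      intro x
      have h2 := Finset.sum_range_by_parts (fun i => x ^ q ^ (s*i)) a' (d+2)
      simp only [smul_eq_mul, show d+2-1 = d+1 from rfl] at h2
      rw [hsum0, mul_zero, zero_sub] at h2
      calc ∑ i ∈ Finset.range (d+2), a' i * x ^ q ^ (s*i)
          = ∑ i ∈ Finset.range (d+2), x ^ q ^ (s*i) * a' i :=
            Finset.sum_congr rfl fun i _ => mul_comm _ _
        _ = -∑ i ∈ Finset.range (d+1),
              (x ^ q ^ (s*(i+1)) - x ^ q ^ (s*i)) * ∑ j ∈ Finset.range (i+1), a' j := h2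
        _ = ∑ i ∈ Finset.range (d+1), β i * (x ^ q ^ (s*(i+1)) - x ^ q ^ (s*i)) := by
            rw [← Finset.sum_neg_distrib]
            refine Finset.sum_congr rfl fun i _ => ?_
            rw [hβ]
            ring
    set D : Fqn →ₗ[Fq] Fqn := frobL hq s - LinearMap.id with hD
    set f : U →ₗ[Fq] Fqn := D.comp U.subtype with hf
    have hvanDU : ∀ v ∈ LinearMap.range f, ∑ i ∈ Finset.range (d+1), β i * v ^ q ^ (s*i) = 0 := by
      rintro v ⟨u, rfl⟩
      have hu : (u:Fqn) ∈ U := u.2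
      have hfu : f u = (u:Fqn) ^ q ^ s - (u:Fqn) := by
        simp only [hf, hD, LinearMap.comp_apply, LinearMap.sub_apply, LinearMap.id_apply,
          Submodule.subtype_apply]
        rfl
      rw [hfu]
      have expand : ∀ i : ℕ, ((u:Fqn) ^ q ^ s - (u:Fqn)) ^ q ^ (s*i)
          = (u:Fqn) ^ q ^ (s*(i+1)) - (u:Fqn) ^ q ^ (s*i) := by
        intro i
        rw [frob_sub' hq, ← pow_mul, ← pow_add, show s + s*i = s*(i+1) from by ring]
      calc ∑ i ∈ Finset.range (d+1), β i * ((u:Fqn) ^ q ^ s - (u:Fqn)) ^ q ^ (s*i)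
          = ∑ i ∈ Finset.range (d+1), β i * ((u:Fqn) ^ q ^ (s*(i+1)) - (u:Fqn) ^ q ^ (s*i)) :=
            Finset.sum_congr rfl fun i _ => by rw [expand i]
        _ = ∑ i ∈ Finset.range (d+2), a' i * (u:Fqn) ^ q ^ (s*i) := (habel _).symm
        _ = 0 := hvanU _ hu
    have hkerle : Module.finrank Fq (LinearMap.ker f) ≤ 1 := by
      have hker1 : ∀ z : LinearMap.ker f, ((z : U) : Fqn) ∈ Submodule.span Fq {(1:Fqn)} := by
        rintro ⟨u, huk⟩
        rw [LinearMap.mem_ker] at huk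
        have hfu : (u:Fqn) ^ q ^ s - (u:Fqn) = 0 := by
          rw [← huk]
          simp only [hf, hD, LinearMap.comp_apply, LinearMap.sub_apply, LinearMap.id_apply,
            Submodule.subtype_apply]
          rfl
        obtain ⟨a0, ha0⟩ := hfix u (sub_eq_zero.mp hfu)
        rw [Submodule.mem_span_singleton]
        exact ⟨a0, by rw [← ha0, Algebra.smul_def, mul_one]⟩
      set g : LinearMap.ker f →ₗ[Fq] Submodule.span Fq {(1:Fqn)} :=
        LinearMap.codRestrict _ (U.subtype.comp (LinearMap.ker f).subtype) hker1 with hg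
      have hginj : Function.Injective g := by
        intro z1 z2 hz
        have hval := congrArg (fun z : ↥(Submodule.span Fq {(1:Fqn)}) => (z : Fqn)) hz
        simp only [hg, LinearMap.codRestrict_apply, LinearMap.comp_apply,
          Submodule.subtype_apply] at hval
        exact Subtype.val_injective (Subtype.val_injective hval)
      calc Module.finrank Fq (LinearMap.ker f)
          ≤ Module.finrank Fq (Submodule.span Fq {(1:Fqn)}) :=
            LinearMap.finrank_le_finrank_of_injective hginj
        _ = 1 := finrank_span_singleton one_ne_zero
    have hrankDU : d + 1 ≤ Module.finrank Fq (LinearMap.range f) := by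
      have hrn := LinearMap.finrank_range_add_finrank_ker f
      have hUW : Module.finrank Fq U = Module.finrank Fq W := LinearEquiv.finrank_map_eq e W
      omega
    have hβ0 : ∀ i ≤ d, β i = 0 := ih (LinearMap.range f) β hvanDU hrankDU
    have hpart : ∀ i ≤ d + 2, ∑ j ∈ Finset.range i, a' j = 0 := by
      intro i hi
      rcases Nat.lt_or_ge i (d+2) with h|h
      · match i with
        | 0 => simp
        | (t+1) =>
          have hb := hβ0 t (by omega)
          rw [hβ] at hb
          exact neg_eq_zero.mp hb
      · rw [show i = d + 2 by omega]
        exact hsum0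
    have ha'0 : ∀ i ≤ d+1, a' i = 0 := by
      intro i hi
      have h1 := hpart i (by omega)
      have h2 := hpart (i+1) (by omega)
      rw [Finset.sum_range_succ, h1, zero_add] at h2
      exact h2
    intro i hi
    have hz := ha'0 i hi
    rw [ha'] at hz
    exact (mul_eq_zero.mp hz).resolve_right (pow_ne_zero _ hw0)

end LemA

section Decomp

variable {q n : ℕ} {Fq Fqn : Type} [Field Fq] [Fintype Fq] [Field Fqn] [Fintype Fqn]
  [Algebra Fq Fqn]

lemma frob_funIndep (hq : Fintype.card Fq = q) (hqn : Fintype.card Fqn = q ^ n) :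
    LinearIndependent Fqn (fun t : Fin n => (fun x : Fqn => x ^ q ^ (t:ℕ))) := by
  have hq2 : 1 < q := by rw [← hq]; exact Fintype.one_lt_card
  have key : ∀ t1 t2 : ℕ, t1 < t2 → t2 < n → (∀ x : Fqn, x ^ q ^ t1 = x ^ q ^ t2) → False := by
    intro t1 t2 h12 h2n hx
    have hall : ∀ x : Fqn, x ^ q ^ (t2 - t1) = x := by
      intro x
      have h1 : (x ^ q ^ (t2-t1)) ^ q ^ t1 = x ^ q ^ t1 := by
        rw [← pow_mul, ← pow_add, show t2 - t1 + t1 = t2 by omega]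
        exact (hx x).symm
      have hsub : (x ^ q ^ (t2-t1) - x) ^ q ^ t1 = 0 := by
        rw [frob_sub' hq, h1, sub_self]
      have := pow_eq_zero_iff (pow_ne_zero t1 (by omega : q ≠ 0)) |>.mp hsub
      exact sub_eq_zero.mp this
    have hle := card_le_of_forall_pow (q ^ (t2 - t1)) (Nat.one_lt_pow (by omega) hq2) hall
    rw [hqn] at hle
    have := (Nat.pow_le_pow_iff_right hq2).mp hle
    omega
  have hinj : Function.Injective (fun t : Fin n => (powMonoidHom (q ^ (t:ℕ)) : Fqn →* Fqn)) := by
    intro t1 t2 h12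
    by_contra hne
    have hx : ∀ x : Fqn, x ^ q ^ (t1:ℕ) = x ^ q ^ (t2:ℕ) := fun x => DFunLike.congr_fun h12 x
    rcases lt_trichotomy (t1:ℕ) (t2:ℕ) with h|h|h
    · exact key t1 t2 h t2.isLt hx
    · exact hne (Fin.ext h)
    · exact key t2 t1 h t1.isLt (fun x => (hx x).symm)
  have h := (linearIndependent_monoidHom Fqn Fqn).comp _ hinj
  exact h

lemma decomp (hq : Fintype.card Fq = q) (hqn : Fintype.card Fqn = q ^ n) (hn : 0 < n)
    (φ : Fqn →ₗ[Fq] Fqn) :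
    ∃ c : ℕ → Fqn, ∀ x : Fqn, φ x = ∑ t ∈ Finset.range n, c t * x ^ q ^ t := by
  haveI : FiniteDimensional Fq Fqn := Module.Finite.of_finite
  haveI : Nonempty (Fin n) := ⟨⟨0, hn⟩⟩
  have hq2 : 1 < q := by rw [← hq]; exact Fintype.one_lt_card
  have hfr : Module.finrank Fq Fqn = n := by
    have hc : Fintype.card Fqn = Fintype.card Fq ^ Module.finrank Fq Fqn := Module.card_eq_pow_finrank
    rw [hqn, hq] at hc
    exact (Nat.pow_right_injective hq2 hc.symm)
  set F : Fin n → (Fqn →ₗ[Fq] Fqn) := fun t => frobL hq (t:ℕ) with hF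
  set Φ : (Fqn →ₗ[Fq] Fqn) →ₗ[Fqn] (Fqn → Fqn) :=
    { toFun := fun f => ⇑f
      map_add' := fun f g => rfl
      map_smul' := fun c f => rfl } with hΦ
  have hFind : LinearIndependent Fqn F := by
    apply LinearIndependent.of_comp Φ
    exact frob_funIndep hq hqn
  have hrank : Module.finrank Fqn (Fqn →ₗ[Fq] Fqn) = n := by
    let b : Module.Basis (Fin n) Fq Fqn := Module.finBasisOfFinrankEq Fq Fqn hfr
    have he := (b.constr Fqn : (Fin n → Fqn) ≃ₗ[Fqn] (Fqn →ₗ[Fq] Fqn)).finrank_eq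
    rw [← he, Module.finrank_fin_fun]
  have hspan : Submodule.span Fqn (Set.range F) = ⊤ := by
    apply hFind.span_eq_top_of_card_eq_finrank
    rw [Fintype.card_fin, hrank]
  have hmem : φ ∈ Submodule.span Fqn (Set.range F) := hspan ▸ Submodule.mem_top
  obtain ⟨cf, hcf⟩ := (Submodule.mem_span_range_iff_exists_fun Fqn).mp hmem
  refine ⟨fun t => if h : t < n then cf ⟨t, h⟩ else 0, fun x => ?_⟩
  have hx := congrArg (fun ψ : Fqn →ₗ[Fq] Fqn => ψ x) hcf
  simp only [LinearMap.coe_sum, Finset.sum_apply, LinearMap.smul_apply] at hx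
  have hx2 : ∑ i : Fin n, cf i * x ^ q ^ (i:ℕ) = φ x := by
    rw [← hx]
    refine Finset.sum_congr rfl fun i _ => ?_
    rw [smul_eq_mul, hF, frobL_apply]
  rw [← hx2, ← Fin.sum_univ_eq_sum_range (fun t => (if h : t < n then cf ⟨t, h⟩ else 0) * x ^ q ^ t) n]
  refine Finset.sum_congr rfl fun i _ => ?_
  rw [dif_pos i.isLt]

lemma charIndepCoeff
    (hind : LinearIndependent Fqn (fun t : Fin n => (fun x : Fqn => x ^ q ^ (t:ℕ))))
    {Q : Type} [AddCommGroup Q] [Module Fqn Q]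
    (w : ℕ → Q) (h : ∀ x : Fqn, ∑ t ∈ Finset.range n, x ^ q ^ t • w t = 0) :
    ∀ t < n, w t = 0 := by
  intro t0 ht0
  haveI : Module.Projective Fqn Q := Module.Projective.of_free
  rw [← Module.forall_dual_apply_eq_zero_iff Fqn]
  intro ψ
  have hcoef := Fintype.linearIndependent_iff.mp hind (fun i : Fin n => ψ (w (i:ℕ)))
  have hzero : ∑ i : Fin n, ψ (w (i:ℕ)) • (fun x : Fqn => x ^ q ^ (i:ℕ)) = 0 := by
    funext x
    have hx := congrArg ψ (h x)
    rw [map_sum, map_zero] at hx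
    simp only [map_smul, smul_eq_mul] at hx
    have hx2 : ∑ i : Fin n, x ^ q ^ (i:ℕ) * ψ (w (i:ℕ)) = 0 := by
      rw [Fin.sum_univ_eq_sum_range (fun t => x ^ q ^ t * ψ (w t)) n]
      exact hx
    simp only [Finset.sum_apply, Pi.smul_apply, smul_eq_mul, Pi.zero_apply]
    rw [← hx2]
    exact Finset.sum_congr rfl fun i _ => mul_comm _ _
  exact hcoef hzero ⟨t0, ht0⟩

end Decomp


theorem stmt13 (q n m k s ℓ : ℕ) (Fq Fqn : Type) [Field Fq] [Fintype Fq] [Field Fqn]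
    [Fintype Fqn] [Algebra Fq Fqn]
    (hq : Fintype.card Fq = q) (hqn : Fintype.card Fqn = q ^ n)
    (hn : 0 < n) (hk : 0 < k) (hkm : k < m) (hmn : m ≤ n)
    (hs : 0 < s) (hgcd : Nat.gcd n s = 1)
    (α : Fin m → Fqn) (hα : LinearIndependent Fq α)
    -- 1 ∈ S
    (h1 : (1 : Fqn) ∈ Set.range α)
    -- ℓ is the smallest positive integer with u^{q^ℓ} = u for every u ∈ U_S
    (hℓpos : 0 < ℓ)
    (hℓ : ∀ u ∈ Submodule.span Fq (Set.range α), u ^ q ^ ℓ = u)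
    (hℓmin : ∀ j : ℕ, 0 < j → (∀ u ∈ Submodule.span Fq (Set.range α), u ^ q ^ j = u) → ℓ ≤ j) :
    -- ℓ divides n, and (with r = n/ℓ) an F_q-linear map φ is in the right nucleus of
    -- π_S(G_{k,s}) iff φ(x) = ∑_{i<r} cᵢ x^{q^{iℓ}}
    ℓ ∣ n ∧
      ∀ φ : Fqn →ₗ[Fq] Fqn,
        ((∀ a : ℕ → Fqn, ∃ b : ℕ → Fqn, ∀ u ∈ Submodule.span Fq (Set.range α),
            φ (∑ i ∈ Finset.range k, a i * u ^ q ^ (s * i))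
              = ∑ i ∈ Finset.range k, b i * u ^ q ^ (s * i))
          ↔ ∃ c : ℕ → Fqn, ∀ x : Fqn, φ x = ∑ i ∈ Finset.range (n / ℓ), c i * x ^ q ^ (ℓ * i)) := by
  classical
  haveI : FiniteDimensional Fq Fqn := Module.Finite.of_finite
  set V : Submodule Fq Fqn := Submodule.span Fq (Set.range α) with hV
  have hq2 : 1 < q := by rw [← hq]; exact Fintype.one_lt_card
  have h1V : (1:Fqn) ∈ V := Submodule.subset_span h1
  have hVn : ∀ u ∈ V, u ^ q ^ n = u := fun u _ => by rw [← hqn]; exact FiniteField.pow_card u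
  have hgl : Nat.gcd ℓ n = ℓ := by
    have hgcdpos : 0 < Nat.gcd ℓ n := Nat.gcd_pos_of_pos_right ℓ hn
    have hfixg : ∀ u ∈ V, u ^ q ^ (Nat.gcd ℓ n) = u := fun u hu =>
      pow_q_gcd u q ℓ n hℓpos hn (hℓ u hu) (hVn u hu)
    have hle := hℓmin _ hgcdpos hfixg
    have hge : Nat.gcd ℓ n ≤ ℓ := Nat.gcd_le_left n hℓpos
    omega
  have hdvd : ℓ ∣ n := by rw [← hgl]; exact Nat.gcd_dvd_right ℓ n
  have hsn1 : Nat.gcd s n = 1 := by rw [Nat.gcd_comm]; exact hgcd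
  refine ⟨hdvd, fun φ => ⟨?_, ?_⟩⟩
  · -- forward direction
    intro hnuc
    obtain ⟨c, hc⟩ := decomp hq hqn hn φ
    have hind := frob_funIndep (Fqn := Fqn) hq hqn
    have hfrV : Module.finrank Fq V = m := by
      rw [hV, finrank_span_eq_card hα, Fintype.card_fin]
    have key : ∀ t < n, c t ≠ 0 → ℓ ∣ t := by
      intro t htn hct
      -- Step 1: for each j < k, u ↦ u^{q^{s j + t}} restricted to V lies in the span.
      have hHj : ∀ j, j < k → ∃ g : ℕ → Fqn, ∀ u ∈ V,
          u ^ q ^ (s*j + t) = ∑ i ∈ Finset.range k, g i * u ^ q ^ (s*i) := by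
        intro j hj
        set G : Fin k → (↥V → Fqn) := fun i => (fun u => (u:Fqn) ^ q ^ (s*(i:ℕ))) with hG
        set W : Submodule Fqn (↥V → Fqn) := Submodule.span Fqn (Set.range G) with hW
        set Fe : ℕ → (↥V → Fqn) := fun t' => (fun u => (u:Fqn) ^ q ^ (s*j + t')) with hFe
        have hsum : ∀ x u : Fqn,
            ∑ i ∈ Finset.range k, (if i = j then x else 0) * u ^ q ^ (s*i)
              = x * u ^ q ^ (s*j) := by
          intro x u
          simp only [ite_mul, zero_mul]
          rw [Finset.sum_ite_eq' (Finset.range k) j (fun i => x * u ^ q ^ (s*i)),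
            if_pos (Finset.mem_range.mpr hj)]
        have hexp : ∀ x u : Fqn, φ (x * u ^ q ^ (s*j))
            = ∑ t' ∈ Finset.range n, c t' * x ^ q ^ t' * u ^ q ^ (s*j + t') := by
          intro x u
          rw [hc]
          refine Finset.sum_congr rfl fun t' _ => ?_
          rw [mul_pow, ← pow_mul, ← pow_add, ← mul_assoc]
        have hmemW : ∀ x : Fqn,
            (fun u : ↥V => ∑ t' ∈ Finset.range n, c t' * x ^ q ^ t' * Fe t' u) ∈ W := by
          intro x
          obtain ⟨b, hb⟩ := hnuc (fun i => if i = j then x else 0)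
          have hfun : (fun u : ↥V => ∑ t' ∈ Finset.range n, c t' * x ^ q ^ t' * Fe t' u)
              = fun u : ↥V => ∑ i ∈ Finset.range k, b i * (u:Fqn) ^ q ^ (s*i) := by
            funext u
            have h1b := hb (u:Fqn) u.2
            rw [hsum x (u:Fqn)] at h1b
            simp only [hFe]
            exact (hexp x (u:Fqn)).symm.trans h1b
          rw [hfun]
          have hfun2 : (fun u : ↥V => ∑ i ∈ Finset.range k, b i * (u:Fqn) ^ q ^ (s*i))
              = ∑ i : Fin k, b (i:ℕ) • G i := by
            funext u
            simp only [Finset.sum_apply, Pi.smul_apply, smul_eq_mul, hG]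
            exact (Fin.sum_univ_eq_sum_range (fun i => b i * (u:Fqn) ^ q ^ (s*i)) k).symm
          rw [hfun2]
          exact Submodule.sum_mem _ fun i _ =>
            Submodule.smul_mem _ _ (Submodule.subset_span ⟨i, rfl⟩)
        set π := W.mkQ with hπ
        have hzero : ∀ x : Fqn,
            ∑ t' ∈ Finset.range n, x ^ q ^ t' • (c t' • π (Fe t')) = 0 := by
          intro x
          have hm0 : π (fun u : ↥V => ∑ t' ∈ Finset.range n, c t' * x ^ q ^ t' * Fe t' u) = 0 := by
            rw [hπ, Submodule.mkQ_apply]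
            exact (Submodule.Quotient.mk_eq_zero W).mpr (hmemW x)
          have hfs : (fun u : ↥V => ∑ t' ∈ Finset.range n, c t' * x ^ q ^ t' * Fe t' u)
              = ∑ t' ∈ Finset.range n, (c t' * x ^ q ^ t') • Fe t' := by
            funext u
            simp only [Finset.sum_apply, Pi.smul_apply, smul_eq_mul]
          rw [hfs, map_sum] at hm0
          rw [← hm0]
          refine Finset.sum_congr rfl fun t' _ => ?_
          rw [map_smul, smul_smul, mul_comm]
        have hsep := charIndepCoeff hind (fun t' => c t' • π (Fe t')) hzero t htn
        have hFeW : Fe t ∈ W := by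
          rcases smul_eq_zero.mp hsep with h|h
          · exact absurd h hct
          · rw [hπ, Submodule.mkQ_apply] at h
            exact (Submodule.Quotient.mk_eq_zero W).mp h
        obtain ⟨g, hg⟩ := (Submodule.mem_span_range_iff_exists_fun Fqn).mp hFeW
        refine ⟨fun i => if h : i < k then g ⟨i, h⟩ else 0, fun u hu => ?_⟩
        have hgv := congrArg (fun f : ↥V → Fqn => f ⟨u, hu⟩) hg
        simp only [Finset.sum_apply, Pi.smul_apply, smul_eq_mul, hG, hFe] at hgv
        have h2 : ∑ i ∈ Finset.range k, (if h : i < k then g ⟨i, h⟩ else 0) * u ^ q ^ (s*i)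
            = ∑ i : Fin k, g i * u ^ q ^ (s*(i:ℕ)) := by
          rw [← Fin.sum_univ_eq_sum_range
            (fun i => (if h : i < k then g ⟨i, (by assumption)⟩ else 0) * u ^ q ^ (s*i)) k]
          exact Finset.sum_congr rfl fun i _ => by rw [dif_pos i.isLt]
        rw [h2, hgv]
      -- Step 2: bootstrap
      obtain ⟨g₀, hg₀⟩ := hHj 0 hk
      simp only [Nat.mul_zero, Nat.zero_add] at hg₀
      have hclaim : ∀ j, j ≤ k - 1 → ∀ i, i < k → k - j ≤ i → g₀ i = 0 := by
        intro j
        induction j with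
        | zero => intro _ i hik hki; exact absurd hki (by omega)
        | succ j ihj =>
          intro hjk i hik hki
          rcases Nat.lt_or_ge i (k - j) with hi | hi
          swap
          · exact ihj (by omega) i hik hi
          have hieq : i = k - (j+1) := by omega
          obtain ⟨g, hg⟩ := hHj (j+1) (by omega)
          have hA : ∀ u ∈ V, u ^ q ^ (s*(j+1) + t)
              = ∑ i' ∈ Finset.range (k-j), (g₀ i') ^ q ^ (s*(j+1))
                  * u ^ q ^ (s*(i' + (j+1))) := by
            intro u hu
            calc u ^ q ^ (s*(j+1) + t)
                = (u ^ q ^ t) ^ q ^ (s*(j+1)) := by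
                  rw [← pow_mul, ← pow_add, show t + s*(j+1) = s*(j+1) + t by ring]
              _ = ∑ i' ∈ Finset.range k, (g₀ i') ^ q ^ (s*(j+1))
                    * u ^ q ^ (s*(i' + (j+1))) := by
                  rw [hg₀ u hu, frob_sum' hq]
                  refine Finset.sum_congr rfl fun i' _ => ?_
                  rw [mul_pow, ← pow_mul, ← pow_add,
                    show s*i' + s*(j+1) = s*(i' + (j+1)) by ring]
              _ = ∑ i' ∈ Finset.range (k-j), (g₀ i') ^ q ^ (s*(j+1))
                    * u ^ q ^ (s*(i' + (j+1))) := by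
                  refine (Finset.sum_subset (Finset.range_subset_range.mpr (by omega)) ?_).symm
                  intro i' hi' hni'
                  rw [ihj (by omega) i' (Finset.mem_range.mp hi')
                    (by simp only [Finset.mem_range] at hni' ⊢; omega),
                    zero_pow (pow_ne_zero _ (by omega : q ≠ 0)), zero_mul]
          set hcoe : ℕ → Fqn := fun i =>
            (if j+1 ≤ i then (g₀ (i - (j+1))) ^ q ^ (s*(j+1)) else 0)
              - (if i < k then g i else 0) with hhcoe
          have hvan : ∀ u ∈ V, ∑ i ∈ Finset.range (k+1), hcoe i * u ^ q ^ (s*i) = 0 := by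
            intro u hu
            have hsplit : ∀ i, hcoe i * u ^ q ^ (s*i)
                = (if j+1 ≤ i then (g₀ (i-(j+1))) ^ q ^ (s*(j+1)) * u ^ q ^ (s*i) else 0)
                  - (if i < k then g i * u ^ q ^ (s*i) else 0) := by
              intro i
              simp only [hhcoe, sub_mul, ite_mul, zero_mul]
            rw [Finset.sum_congr rfl (fun i _ => hsplit i), Finset.sum_sub_distrib]
            have hfirst : ∑ i ∈ Finset.range (k+1),
                (if j+1 ≤ i then (g₀ (i-(j+1))) ^ q ^ (s*(j+1)) * u ^ q ^ (s*i) else 0)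
                = ∑ i' ∈ Finset.range (k-j), (g₀ i') ^ q ^ (s*(j+1))
                    * u ^ q ^ (s*(i' + (j+1))) := by
              have hss := sum_shift (k-j) (j+1)
                (fun i' => (g₀ i') ^ q ^ (s*(j+1)) * u ^ q ^ (s*(i' + (j+1))))
              rw [show k - j + (j+1) = k+1 by omega] at hss
              rw [← hss]
              refine Finset.sum_congr rfl fun i hi => ?_
              split_ifs with hcond
              · rw [show i - (j+1) + (j+1) = i by omega]
              · rfl
            have hsecond : ∑ i ∈ Finset.range (k+1), (if i < k then g i * u ^ q ^ (s*i) else 0)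
                = ∑ i ∈ Finset.range k, g i * u ^ q ^ (s*i) := by
              rw [Finset.sum_range_succ, if_neg (lt_irrefl k), add_zero]
              exact Finset.sum_congr rfl fun i hi => if_pos (Finset.mem_range.mp hi)
            rw [hfirst, hsecond, ← hA u hu, ← hg u hu, sub_self]
          have hall := lemA hq hqn hn hs hsn1 k V hcoe hvan (by rw [hfrV]; omega)
          have hk0 := hall k (le_refl k)
          rw [hhcoe] at hk0
          simp only [if_pos (by omega : j+1 ≤ k), if_neg (lt_irrefl k), sub_zero] at hk0
          have := (pow_eq_zero_iff (pow_ne_zero _ (by omega : q ≠ 0))).mp hk0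
          rw [hieq]
          exact this
      have hg₀1 : ∀ i, 1 ≤ i → i < k → g₀ i = 0 := fun i hi1 hik =>
        hclaim (k-1) (le_refl _) i hik (by omega)
      have hfixV : ∀ u ∈ V, u ^ q ^ t = u := by
        have hfin : ∀ u ∈ V, u ^ q ^ t = g₀ 0 * u := by
          intro u hu
          rw [hg₀ u hu]
          rw [Finset.sum_eq_single 0 (fun i hi hne => by
            rw [hg₀1 i (by omega) (Finset.mem_range.mp hi), zero_mul])
            (fun h0 => absurd (Finset.mem_range.mpr hk) h0)]
          rw [Nat.mul_zero, pow_zero, pow_one]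
        have hone : g₀ 0 = 1 := by
          have hh := hfin 1 h1V
          rw [one_pow, mul_one] at hh
          exact hh.symm
        intro u hu
        rw [hfin u hu, hone, one_mul]
      rcases Nat.eq_zero_or_pos t with rfl | ht
      · exact dvd_zero ℓ
      · have hfixg : ∀ u ∈ V, u ^ q ^ (Nat.gcd t ℓ) = u := fun u hu =>
          pow_q_gcd u q t ℓ ht hℓpos (hfixV u hu) (hℓ u hu)
        have hle2 := hℓmin _ (Nat.gcd_pos_of_pos_right t hℓpos) hfixg
        have hge2 : Nat.gcd t ℓ ≤ ℓ := Nat.le_of_dvd hℓpos (Nat.gcd_dvd_right t ℓ)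
        have heq2 : Nat.gcd t ℓ = ℓ := by omega
        rw [← heq2]
        exact Nat.gcd_dvd_left t ℓ
    -- assemble
    refine ⟨fun i => c (ℓ * i), fun x => ?_⟩
    rw [hc x]
    have hstep1 : ∑ t ∈ Finset.range n, c t * x ^ q ^ t
        = ∑ t ∈ (Finset.range n).filter (fun t => ℓ ∣ t), c t * x ^ q ^ t := by
      refine (Finset.sum_subset (Finset.filter_subset _ _) ?_).symm
      intro t htn hnt
      rcases eq_or_ne (c t) 0 with h|h
      · rw [h, zero_mul]
      · exact absurd (Finset.mem_filter.mpr ⟨htn, key t (Finset.mem_range.mp htn) h⟩) hnt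
    rw [hstep1]
    refine Finset.sum_nbij' (fun t => t / ℓ) (fun i => ℓ * i) ?_ ?_ ?_ ?_ ?_
    · intro a ha
      obtain ⟨han, had⟩ := Finset.mem_filter.mp ha
      rw [Finset.mem_range] at han ⊢
      rw [Nat.div_lt_iff_lt_mul hℓpos, Nat.div_mul_cancel hdvd]
      exact han
    · intro i hi
      rw [Finset.mem_range] at hi
      refine Finset.mem_filter.mpr ⟨Finset.mem_range.mpr ?_, Dvd.intro i rfl⟩
      calc ℓ * i < ℓ * (n / ℓ) := by
            exact (Nat.mul_lt_mul_left hℓpos).mpr hi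
        _ = n := Nat.mul_div_cancel' hdvd
    · intro a ha
      exact Nat.mul_div_cancel' (Finset.mem_filter.mp ha).2
    · intro i hi
      exact Nat.mul_div_cancel_left i hℓpos
    · intro a ha
      simp only [Nat.mul_div_cancel' (Finset.mem_filter.mp ha).2]
  · -- backward direction
    rintro ⟨c, hcφ⟩ a
    refine ⟨fun i => ∑ jj ∈ Finset.range (n / ℓ), c jj * (a i) ^ q ^ (ℓ * jj), fun u hu => ?_⟩
    have hufix : ∀ jj : ℕ, u ^ q ^ (ℓ * jj) = u := by
      intro jj
      induction jj with
      | zero => simp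
      | succ jj ih =>
        rw [show ℓ * (jj+1) = ℓ + ℓ*jj by ring, pow_add, pow_mul, hℓ u hu, ih]
    have hexp : ∀ jj : ℕ, (∑ i ∈ Finset.range k, a i * u ^ q ^ (s*i)) ^ q ^ (ℓ*jj)
        = ∑ i ∈ Finset.range k, (a i) ^ q ^ (ℓ*jj) * u ^ q ^ (s*i) := by
      intro jj
      rw [frob_sum' hq]
      refine Finset.sum_congr rfl fun i _ => ?_
      rw [mul_pow]
      congr 1
      rw [← pow_mul, mul_comm (q ^ (s*i)) (q ^ (ℓ*jj)), pow_mul, hufix jj]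
    rw [hcφ]
    calc ∑ jj ∈ Finset.range (n/ℓ), c jj * (∑ i ∈ Finset.range k, a i * u ^ q ^ (s*i)) ^ q ^ (ℓ*jj)
        = ∑ jj ∈ Finset.range (n/ℓ), ∑ i ∈ Finset.range k,
            c jj * ((a i) ^ q ^ (ℓ*jj) * u ^ q ^ (s*i)) := by
          refine Finset.sum_congr rfl fun jj _ => ?_
          rw [hexp jj, Finset.mul_sum]
      _ = ∑ i ∈ Finset.range k, ∑ jj ∈ Finset.range (n/ℓ),
            c jj * ((a i) ^ q ^ (ℓ*jj) * u ^ q ^ (s*i)) := Finset.sum_comm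
      _ = ∑ i ∈ Finset.range k,
            (∑ jj ∈ Finset.range (n/ℓ), c jj * (a i) ^ q ^ (ℓ*jj)) * u ^ q ^ (s*i) := by
          refine Finset.sum_congr rfl fun i _ => ?_
          rw [Finset.sum_mul]
          exact Finset.sum_congr rfl fun jj _ => by ring
end
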